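/- arXiv:1603.09165 — 11 statements merged into one kernel-verified Lean document; each statement's English description precedes it below -/
import Mathlib

section
/- A partial dynamical system G ↷ X is topologically free if and only if the associated transformation groupoid G ⋉ X is topologically principal, i.e., the set of points x ∈ X such that the only g ∈ G with x ∈ U_{g⁻¹} and g.x = x is g = e, is dense in X. -/
/-- A partial action of a group `G` on a topological space `X`. -/
structure PartialAction (G X : Type*) [Group G] [TopologicalSpace X] where
  U : G → Set X
  act : G → X → X
  isOpen : ∀ g, IsOpen (U g)
  U_one : U 1 = Set.univ
  act_one : ∀ x, act 1 x = x
  mapsTo : ∀ g, Set.MapsTo (act g) (U g⁻¹) (U g)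
  continuousOn : ∀ g, ContinuousOn (act g) (U g⁻¹)
  act_inv : ∀ g, ∀ x ∈ U g⁻¹, act g⁻¹ (act g x) = x
  comp_mem : ∀ g h : G, ∀ x ∈ U h⁻¹, act h x ∈ U g⁻¹ → x ∈ U (g * h)⁻¹
  act_mul : ∀ g h : G, ∀ x ∈ U h⁻¹, act h x ∈ U g⁻¹ → act (g * h) x = act g (act h x)

/-- A partial system `G ↷ X` is topologically free iff the transformation groupoid
`G ⋉ X` is topologically principal, i.e. the set of units with trivial isotropy is dense. -/
theorem stmt_2 {G X : Type*} [Group G] [Countable G] [TopologicalSpace X]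
    [LocallyCompactSpace X] [T2Space X] [SecondCountableTopology X]
    (α : PartialAction G X) :
    (∀ g : G, g ≠ 1 → α.U g⁻¹ ⊆ closure {x ∈ α.U g⁻¹ | α.act g x ≠ x}) ↔
      Dense {x : X | ∀ g : G, x ∈ α.U g⁻¹ → α.act g x = x → g = 1} := by
  set W : G → Set X := fun g => {x ∈ α.U g⁻¹ | α.act g x ≠ x} with hW
  have hWopen : ∀ g, IsOpen (W g) := by
    intro g
    have hd : IsOpen ((Set.diagonal X)ᶜ) := isClosed_diagonal.isOpen_compl
    have hc : ContinuousOn (fun x => (α.act g x, x)) (α.U g⁻¹) :=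
      (α.continuousOn g).prodMk continuousOn_id
    have h2 := hc.isOpen_inter_preimage (α.isOpen g⁻¹) hd
    have he : W g = α.U g⁻¹ ∩ (fun x => (α.act g x, x)) ⁻¹' (Set.diagonal X)ᶜ := by
      ext x; simp [hW, Set.diagonal]
    rw [he]; exact h2
  constructor
  · intro h
    classical
    set O : G → Set X := fun g =>
      if g = 1 then Set.univ else (closure (α.U g⁻¹))ᶜ ∪ W g with hO
    have hOopen : ∀ g, IsOpen (O g) := by
      intro g
      by_cases hg : g = 1 <;> simp only [hO, hg, if_pos, if_neg, if_true, if_false]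
      · exact isOpen_univ
      · exact isClosed_closure.isOpen_compl.union (hWopen g)
    have hOdense : ∀ g, Dense (O g) := by
      intro g
      by_cases hg : g = 1
      · simp [hO, hg, dense_univ]
      · have hsub : closure (α.U g⁻¹) ⊆ closure (W g) := by
          have := closure_mono (h g hg)
          rwa [closure_closure] at this
        intro x
        by_cases hx : x ∈ closure (α.U g⁻¹)
        · have : x ∈ closure (W g) := hsub hx
          exact closure_mono (fun z hz => by simp [hO, hg]; exact Or.inr hz) this
        · exact subset_closure (by simp [hO, hg]; exact Or.inl hx)
    have hdense : Dense (⋂ g, O g) :=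
      dense_iInter_of_isOpen hOopen hOdense
    refine hdense.mono ?_
    intro x hx g hxg hfix
    by_contra hg
    have hxO : x ∈ O g := Set.mem_iInter.mp hx g
    simp only [hO, hg, if_neg, if_false] at hxO
    rcases hxO with h1 | h2
    · exact h1 (subset_closure hxg)
    · exact h2.2 hfix
  · intro hD g hg x hx
    rw [mem_closure_iff]
    intro o ho hxo
    have hne : (o ∩ α.U g⁻¹).Nonempty := ⟨x, hxo, hx⟩
    obtain ⟨y, hy1, hy2⟩ :=
      hD.inter_open_nonempty (o ∩ α.U g⁻¹) (ho.inter (α.isOpen g⁻¹)) hne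
    exact ⟨y, hy1.1, hy1.2, fun hfix => hg (hy2 g hy1.2 hfix)⟩
end

section
/- The canonical homomorphism from the free semigroup F⁺_S on a countable set S to the metabelianization F_S/F_S'' of the free group F_S is injective. -/
/-! Auxiliary construction: a metabelian group `MG S` (semidirect product of the free
abelian group on `S` acting on the group ring, i.e. the "affine" / wreath-type group),
into which the free monoid on `S` maps injectively. -/

open Finsupp

namespace Stmt3Aux

variable {S : Type*}

/-- Translation action on the group ring part. -/
noncomputable def shiftA (b : S →₀ ℤ) (a : (S →₀ ℤ) →₀ ℤ) : (S →₀ ℤ) →₀ ℤ :=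
  a.mapDomain (b + ·)

lemma shiftA_add_dom (b c : S →₀ ℤ) (a : (S →₀ ℤ) →₀ ℤ) :
    shiftA (b + c) a = shiftA b (shiftA c a) := by
  unfold shiftA
  rw [← Finsupp.mapDomain_comp]
  congr 1
  funext x
  simp [Function.comp, add_assoc]

lemma shiftA_zero_dom (a : (S →₀ ℤ) →₀ ℤ) : shiftA (0 : S →₀ ℤ) a = a := by
  unfold shiftA
  have h : (fun x : S →₀ ℤ => (0 : S →₀ ℤ) + x) = id := funext fun x => zero_add x
  rw [h, Finsupp.mapDomain_id]

lemma shiftA_add (b : S →₀ ℤ) (a a' : (S →₀ ℤ) →₀ ℤ) :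
    shiftA b (a + a') = shiftA b a + shiftA b a' :=
  Finsupp.mapDomain_add

lemma shiftA_zero (b : S →₀ ℤ) : shiftA b (0 : (S →₀ ℤ) →₀ ℤ) = 0 :=
  Finsupp.mapDomain_zero

lemma shiftA_injective (b : S →₀ ℤ) : Function.Injective (shiftA (S := S) b) :=
  Finsupp.mapDomain_injective (fun _ _ h => by simpa using h)

/-- The metabelian group. -/
@[ext] structure MG (S : Type*) where
  b : S →₀ ℤ
  a : (S →₀ ℤ) →₀ ℤ

noncomputable instance : Mul (MG S) := ⟨fun x y => ⟨x.b + y.b, x.a + shiftA x.b y.a⟩⟩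
noncomputable instance : One (MG S) := ⟨⟨0, 0⟩⟩
noncomputable instance : Inv (MG S) := ⟨fun x => ⟨-x.b, -(shiftA (-x.b) x.a)⟩⟩

lemma MG.mul_def (x y : MG S) : x * y = ⟨x.b + y.b, x.a + shiftA x.b y.a⟩ := rfl
lemma MG.one_def : (1 : MG S) = ⟨0, 0⟩ := rfl

noncomputable instance : Group (MG S) where
  mul_assoc x y z := by
    simp only [MG.mul_def, shiftA_add, shiftA_add_dom, add_assoc]
  one_mul x := by simp [MG.mul_def, MG.one_def, shiftA_zero_dom]
  mul_one x := by simp [MG.mul_def, MG.one_def, shiftA_zero]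
  inv_mul_cancel x := by
    show (⟨-x.b, -(shiftA (-x.b) x.a)⟩ * x : MG S) = 1
    simp [MG.mul_def, MG.one_def]

/-- Projection to the abelian part. -/
noncomputable def piB : MG S →* Multiplicative (S →₀ ℤ) where
  toFun x := Multiplicative.ofAdd x.b
  map_one' := rfl
  map_mul' x y := rfl

lemma metab : derivedSeries (MG S) 2 ≤ ⊥ := by
  have h1 : derivedSeries (MG S) 1 ≤ piB.ker := by
    rw [derivedSeries_one]
    exact Abelianization.commutator_subset_ker piB
  show ⁅derivedSeries (MG S) 1, derivedSeries (MG S) 1⁆ ≤ ⊥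
  refine le_trans (Subgroup.commutator_mono h1 h1) ?_
  rw [Subgroup.commutator_le]
  intro x hx y hy
  have hxb : x.b = 0 := hx
  have hyb : y.b = 0 := hy
  have : x * y = y * x := by
    simp [MG.mul_def, hxb, hyb, shiftA_zero_dom, add_comm]
  simp [commutatorElement_def, this, Subgroup.mem_bot, mul_assoc]

/-- The homomorphism from the free group. -/
noncomputable def phi : FreeGroup S →* MG S :=
  FreeGroup.lift fun s => ⟨Finsupp.single s 1, Finsupp.single 0 1⟩

/-- The `b`-part of the image of a positive word. -/
noncomputable def Bw : List S → (S →₀ ℤ)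
  | [] => 0
  | s :: l => Finsupp.single s 1 + Bw l

/-- The `a`-part of the image of a positive word. -/
noncomputable def Aw : List S → ((S →₀ ℤ) →₀ ℤ)
  | [] => 0
  | s :: l => Finsupp.single 0 1 + shiftA (Finsupp.single s 1) (Aw l)

lemma phi_word (l : List S) :
    phi (FreeMonoid.lift (fun a => FreeGroup.of a : S → FreeGroup S) (FreeMonoid.ofList l))
      = ⟨Bw l, Aw l⟩ := by
  induction l with
  | nil =>
      simp only [FreeMonoid.ofList_nil, map_one]
      rfl
  | cons s l ih =>
      have : FreeMonoid.ofList (s :: l) = FreeMonoid.of s * FreeMonoid.ofList l := rfl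
      rw [this, map_mul, map_mul, ih, FreeMonoid.lift_eval_of]
      have hphi : phi (FreeGroup.of s) = ⟨Finsupp.single s 1, Finsupp.single 0 1⟩ :=
        FreeGroup.lift_apply_of
      rw [hphi, MG.mul_def]
      rfl

/-- sum of coefficients -/
noncomputable def nu (a : (S →₀ ℤ) →₀ ℤ) : ℤ := a.sum fun _ c => c

lemma nu_add (a a' : (S →₀ ℤ) →₀ ℤ) : nu (a + a') = nu a + nu a' := by
  classical
  exact Finsupp.sum_add_index (fun _ _ => rfl) (fun _ _ _ _ => rfl)

lemma nu_shiftA (b : S →₀ ℤ) (a : (S →₀ ℤ) →₀ ℤ) : nu (shiftA b a) = nu a :=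
  Finsupp.sum_mapDomain_index (fun _ => rfl) (fun _ _ _ => rfl)

lemma nu_Aw (l : List S) : nu (Aw l) = l.length := by
  induction l with
  | nil => simp [Aw, nu]
  | cons s l ih =>
      rw [Aw, nu_add, nu_shiftA, ih]
      simp [nu, Finsupp.sum_single_index]
      ring

lemma Aw_nonneg (l : List S) : ∀ q ∈ (Aw l).support, ∀ x, 0 ≤ q x := by
  classical
  haveI : DecidableEq (S →₀ ℤ) := Classical.decEq _
  induction l with
  | nil => simp [Aw]
  | cons s l ih =>
      intro q hq x
      rw [Aw] at hq
      rcases Finset.mem_union.mp (Finsupp.support_add hq) with h | h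
      · rcases Finset.mem_singleton.mp (Finsupp.support_single_subset h) with rfl
        simp
      · rcases Finset.mem_image.mp (Finsupp.mapDomain_support h) with ⟨q', hq', rfl⟩
        have := ih q' hq' x
        have h2 : (0:ℤ) ≤ Finsupp.single s 1 x := by
          rcases eq_or_ne s x with h | h
          · simp [h]
          · simp [Finsupp.single_apply, h]
        simpa [Finsupp.add_apply] using add_nonneg h2 this

lemma shiftA_single_apply_zero (s : S) (l : List S) :
    (shiftA (Finsupp.single s 1) (Aw l)) 0 = 0 := by
  classical
  haveI : DecidableEq (S →₀ ℤ) := Classical.decEq _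
  by_contra h
  have hmem : (0 : S →₀ ℤ) ∈ (shiftA (Finsupp.single s 1) (Aw l)).support :=
    Finsupp.mem_support_iff.mpr h
  rcases Finset.mem_image.mp (Finsupp.mapDomain_support hmem) with ⟨q, hq, heq⟩
  have := congrArg (fun f : S →₀ ℤ => f s) heq
  simp [Finsupp.add_apply] at this
  have hge := Aw_nonneg l q hq s
  omega

lemma Aw_apply_zero (l : List S) (hl : l ≠ []) : (Aw l) 0 = 1 := by
  cases l with
  | nil => exact absurd rfl hl
  | cons s l =>
      rw [Aw]
      rw [Finsupp.add_apply, shiftA_single_apply_zero]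
      simp

lemma shiftA_apply_same (s : S) (l : List S) :
    (shiftA (Finsupp.single s 1) (Aw l)) (Finsupp.single s 1) = (Aw l) 0 := by
  have h := Finsupp.mapDomain_apply (f := (Finsupp.single s 1 + ·))
    (fun _ _ h => by simpa using h) (Aw l) 0
  simpa [shiftA] using h

lemma shiftA_apply_ne (s t : S) (hst : s ≠ t) (l : List S) :
    (shiftA (Finsupp.single t 1) (Aw l)) (Finsupp.single s 1) = 0 := by
  classical
  haveI : DecidableEq (S →₀ ℤ) := Classical.decEq _
  by_contra h
  have hmem : (Finsupp.single s 1 : S →₀ ℤ) ∈ (shiftA (Finsupp.single t 1) (Aw l)).support :=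
    Finsupp.mem_support_iff.mpr h
  rcases Finset.mem_image.mp (Finsupp.mapDomain_support hmem) with ⟨q, hq, heq⟩
  have := congrArg (fun f : S →₀ ℤ => f t) heq
  simp [Finsupp.add_apply, Finsupp.single_apply, hst] at this
  have hge := Aw_nonneg l q hq t
  omega

lemma key : ∀ l₁ l₂ : List S, Bw l₁ = Bw l₂ → Aw l₁ = Aw l₂ → l₁ = l₂ := by
  intro l₁
  induction l₁ with
  | nil =>
      intro l₂ _ hA
      have := nu_Aw (S := S) []
      rw [hA, nu_Aw] at this
      cases l₂ with
      | nil => rfl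
      | cons t v =>
          exfalso
          simp at this
          omega
  | cons s u ih =>
      intro l₂ hB hA
      have hlen : (Aw (s :: u)).sum (fun _ c => c) = (Aw l₂).sum (fun _ c => c) := by rw [hA]
      have hlen2 : ((s :: u).length : ℤ) = (l₂.length : ℤ) := by
        rw [← nu_Aw, ← nu_Aw]; exact hlen
      cases l₂ with
      | nil =>
          exfalso
          simp at hlen2
          omega
      | cons t v =>
          have hulen : u.length = v.length := by
            simp at hlen2; omega
          rw [Aw, Aw] at hA
          have hA' : shiftA (Finsupp.single s 1) (Aw u)
              = shiftA (Finsupp.single t 1) (Aw v) := add_left_cancel hA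
          rw [Bw, Bw] at hB
          have hst : s = t := by
            cases u with
            | nil =>
                have hv : v = [] := by
                  cases v with
                  | nil => rfl
                  | cons _ _ => simp at hulen
                subst hv
                simp only [Bw, add_zero] at hB
                exact Finsupp.single_left_injective (one_ne_zero (α := ℤ)) hB
            | cons u₀ u' =>
                by_contra hne
                have h1 := shiftA_apply_same s (u₀ :: u')
                rw [hA', shiftA_apply_ne s t hne] at h1
                rw [Aw_apply_zero (u₀ :: u') (by simp)] at h1
                exact one_ne_zero h1.symm
          subst hst
          have hAu : Aw u = Aw v := shiftA_injective _ hA'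
          have hBu : Bw u = Bw v := add_left_cancel hB
          rw [ih v hBu hAu]

end Stmt3Aux

open Stmt3Aux in
/-- The canonical homomorphism from the free monoid on a countable set `S` to the
metabelianization `F_S / F_S''` (quotient of the free group on `S` by the second derived
subgroup) is injective. -/
theorem stmt_3 (S : Type*) [Countable S] :
    Function.Injective (fun w : FreeMonoid S =>
      haveI : (derivedSeries (FreeGroup S) 2).Normal := derivedSeries_normal _ _
      QuotientGroup.mk' (derivedSeries (FreeGroup S) 2)
        ((FreeMonoid.lift (fun a => FreeGroup.of a : S → FreeGroup S)) w)) := by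
  haveI : (derivedSeries (FreeGroup S) 2).Normal := derivedSeries_normal _ _
  have hker : derivedSeries (FreeGroup S) 2 ≤ (phi (S := S)).ker := by
    have h1 : (derivedSeries (FreeGroup S) 2).map (phi (S := S)) ≤ ⊥ :=
      le_trans (map_derivedSeries_le_derivedSeries _ 2) metab
    rwa [le_bot_iff, Subgroup.map_eq_bot_iff] at h1
  set N := derivedSeries (FreeGroup S) 2
  have hbar : ∀ x ∈ N, phi (S := S) x = 1 := fun x hx => hker hx
  let phibar : FreeGroup S ⧸ N →* MG S := QuotientGroup.lift N (phi (S := S)) hbar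
  intro w₁ w₂ h
  have h2 : phi (S := S) (FreeMonoid.lift (fun a => FreeGroup.of a : S → FreeGroup S) w₁)
      = phi (S := S) (FreeMonoid.lift (fun a => FreeGroup.of a : S → FreeGroup S) w₂) := by
    have := congrArg phibar h
    exact this
  have hw₁ : w₁ = FreeMonoid.ofList (FreeMonoid.toList w₁) := rfl
  have hw₂ : w₂ = FreeMonoid.ofList (FreeMonoid.toList w₂) := rfl
  rw [hw₁, hw₂, phi_word, phi_word] at h2
  have hB := congrArg MG.b h2
  have hA := congrArg MG.a h2
  have := key _ _ hB hA
  rw [hw₁, hw₂, this]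
end

section
/- Let P be a subsemigroup of a group G. Then the set G₀ = {g ∈ G : for all p ∈ P, pP ∩ gP ≠ ∅ and pP ∩ g⁻¹P ≠ ∅} is a subgroup of G. -/
/-- For a subsemigroup `P` of a group `G`, the set
`G₀ = {g : ∀ p ∈ P, pP ∩ gP ≠ ∅ and pP ∩ g⁻¹P ≠ ∅}` is a subgroup of `G`. -/
theorem stmt_4 {G : Type*} [Group G] (P : Subsemigroup G) :
    ∃ H : Subgroup G, ∀ g : G, g ∈ H ↔
      ∀ p ∈ P, ({z | ∃ y ∈ P, z = p * y} ∩ {z | ∃ y ∈ P, z = g * y}).Nonempty ∧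
        ({z | ∃ y ∈ P, z = p * y} ∩ {z | ∃ y ∈ P, z = g⁻¹ * y}).Nonempty := by
  refine ⟨{
    carrier := {g : G | ∀ p ∈ P, ({z | ∃ y ∈ P, z = p * y} ∩ {z | ∃ y ∈ P, z = g * y}).Nonempty ∧
        ({z | ∃ y ∈ P, z = p * y} ∩ {z | ∃ y ∈ P, z = g⁻¹ * y}).Nonempty}
    one_mem' := by
      intro p hp
      refine ⟨⟨p * p, ⟨p, hp, rfl⟩, ⟨p * p, P.mul_mem hp hp, (one_mul _).symm⟩⟩,
        ⟨p * p, ⟨p, hp, rfl⟩, ⟨p * p, P.mul_mem hp hp, by simp⟩⟩⟩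
    inv_mem' := by
      intro g hg p hp
      obtain ⟨h1, h2⟩ := hg p hp
      exact ⟨h2, by simpa using h1⟩
    mul_mem' := by
      intro g h hg hh p hp
      constructor
      · obtain ⟨z, ⟨a, ha, rfl⟩, ⟨b, hb, hzb⟩⟩ := (hg p hp).1
        obtain ⟨w, ⟨c, hc, rfl⟩, ⟨d, hd, hwd⟩⟩ := (hh b hb).1
        refine ⟨p * (a * c), ⟨a * c, P.mul_mem ha hc, rfl⟩,
          ⟨d, hd, ?_⟩⟩
        rw [← mul_assoc, hzb, mul_assoc, hwd, ← mul_assoc]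
      · obtain ⟨z, ⟨a, ha, rfl⟩, ⟨b, hb, hzb⟩⟩ := (hh p hp).2
        obtain ⟨w, ⟨c, hc, rfl⟩, ⟨d, hd, hwd⟩⟩ := (hg b hb).2
        refine ⟨p * (a * c), ⟨a * c, P.mul_mem ha hc, rfl⟩, ⟨d, hd, ?_⟩⟩
        rw [← mul_assoc, hzb, mul_assoc, hwd, ← mul_assoc, mul_inv_rev]
  }, fun g => Iff.rfl⟩
end

section
/- Let P be a left cancellative subsemigroup of a group, J its set of constructible right ideals (finite unions condition), and E the corresponding semilattice. Every maximal character of E lies in Ω_P: that is, if χ is a maximal character and X, X₁, …, Xₙ ∈ J satisfy X = X₁ ∪ ⋯ ∪ Xₙ and χ(X) = 1, then χ(Xᵢ) = 1 for some i. -/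
/-- The constructible right ideals of a subsemigroup `P ⊆ G` (as subsets of `G`):
the semilattice generated by `P` under the operations `X ↦ p⁻¹(qX) ∩ P` and intersection,
together with `∅`. -/
inductive IsConstr {G : Type*} [Group G] (P : Set G) : Set G → Prop
  | base : IsConstr P P
  | empty : IsConstr P ∅
  | step (p q : G) (hp : p ∈ P) (hq : q ∈ P) (X : Set G) (hX : IsConstr P X) :
      IsConstr P {y : G | y ∈ P ∧ ∃ x ∈ X, p * y = q * x}
  | inter (X Y : Set G) (hX : IsConstr P X) (hY : IsConstr P Y) : IsConstr P (X ∩ Y)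

/-- A character on the semilattice of constructible right ideals of `P`. -/
def IsCharOn {G : Type*} [Group G] (P : Set G) (χ : Set G → Prop) : Prop :=
  χ P ∧ ¬ χ ∅ ∧ (∀ X Y : Set G, IsConstr P X → IsConstr P Y → (χ (X ∩ Y) ↔ χ X ∧ χ Y)) ∧
    ∀ X : Set G, χ X → IsConstr P X

/-- A maximal character: its filter is maximal among filters of characters. -/
def IsMaxCharOn {G : Type*} [Group G] (P : Set G) (χ : Set G → Prop) : Prop :=
  IsCharOn P χ ∧ ∀ ψ : Set G → Prop, IsCharOn P ψ → (∀ X, χ X → ψ X) → ∀ X, ψ X → χ X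

/-- Finite intersections stay in the filter of a character. -/
lemma char_iInter {G : Type*} [Group G] (P : Set G) (χ : Set G → Prop)
    (hc : IsCharOn P χ) (n : ℕ) (Ys : Fin n → Set G)
    (h : ∀ i, IsConstr P (Ys i) ∧ χ (Ys i)) :
    IsConstr P (P ∩ ⋂ i, Ys i) ∧ χ (P ∩ ⋂ i, Ys i) := by
  obtain ⟨hP, _, hmul, hcon⟩ := hc
  induction n with
  | zero =>
      simp only [Set.iInter_of_empty, Set.inter_univ]
      exact ⟨IsConstr.base, hP⟩
  | succ m ih =>
      have key : (P ∩ ⋂ i, Ys i) = (P ∩ ⋂ i : Fin m, Ys i.succ) ∩ Ys 0 := by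
        ext x
        simp only [Set.mem_inter_iff, Set.mem_iInter]
        constructor
        · rintro ⟨hxP, hall⟩
          exact ⟨⟨hxP, fun i => hall i.succ⟩, hall 0⟩
        · rintro ⟨⟨hxP, hall⟩, h0⟩
          refine ⟨hxP, fun i => ?_⟩
          rcases Fin.eq_zero_or_eq_succ i with rfl | ⟨j, rfl⟩
          · exact h0
          · exact hall j
      obtain ⟨hc1, hχ1⟩ := ih (fun i => Ys i.succ) (fun i => h i.succ)
      rw [key]
      exact ⟨IsConstr.inter _ _ hc1 (h 0).1,
        (hmul _ _ hc1 (h 0).1).2 ⟨hχ1, (h 0).2⟩⟩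

/-- Every maximal character of the semilattice of constructible right ideals lies in `Ω_P`:
if `X = X₁ ∪ ⋯ ∪ Xₙ` with all sets constructible and `χ(X) = 1`, then `χ(Xᵢ) = 1` for
some `i`. -/
theorem stmt_6 {G : Type*} [Group G] (P : Subsemigroup G)
    (χ : Set G → Prop) (hχ : IsMaxCharOn (P : Set G) χ)
    (n : ℕ) (X : Set G) (Xs : Fin n → Set G)
    (hX : IsConstr (P : Set G) X) (hXs : ∀ i, IsConstr (P : Set G) (Xs i))
    (hunion : X = ⋃ i, Xs i) (hχX : χ X) :
    ∃ i, χ (Xs i) := by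
  obtain ⟨hc, hmax⟩ := hχ
  obtain ⟨hP, hne, hmul, hcon⟩ := hc
  by_contra hcontra
  push_neg at hcontra
  -- For each i, find a constructible Y with χ Y and Xs i ∩ Y = ∅.
  have hsep : ∀ i, ∃ Y, IsConstr (P : Set G) Y ∧ χ Y ∧ Xs i ∩ Y = ∅ := by
    intro i
    by_contra hno
    push_neg at hno
    set ψ : Set G → Prop :=
      fun Z => IsConstr (P : Set G) Z ∧ ∃ Y, χ Y ∧ Xs i ∩ Y ⊆ Z with hψ
    have hψchar : IsCharOn (P : Set G) ψ := by
      refine ⟨⟨IsConstr.base, (P : Set G), hP, Set.inter_subset_right⟩, ?_, ?_, fun Z hZ => hZ.1⟩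
      · rintro ⟨-, Y, hY, hsub⟩
        obtain ⟨x, hx⟩ := hno Y (hcon Y hY) hY
        exact hsub hx
      · intro A B hA hB
        constructor
        · rintro ⟨-, Y, hY, hsub⟩
          exact ⟨⟨hA, Y, hY, hsub.trans Set.inter_subset_left⟩,
            ⟨hB, Y, hY, hsub.trans Set.inter_subset_right⟩⟩
        · rintro ⟨⟨-, Y1, hY1, hs1⟩, ⟨-, Y2, hY2, hs2⟩⟩
          refine ⟨IsConstr.inter _ _ hA hB, Y1 ∩ Y2,
            (hmul _ _ (hcon _ hY1) (hcon _ hY2)).2 ⟨hY1, hY2⟩, ?_⟩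
          intro x hx
          exact ⟨hs1 ⟨hx.1, hx.2.1⟩, hs2 ⟨hx.1, hx.2.2⟩⟩
    have hext : ∀ Z, χ Z → ψ Z := fun Z hZ => ⟨hcon Z hZ, Z, hZ, Set.inter_subset_right⟩
    have : χ (Xs i) := hmax ψ hψchar hext (Xs i)
      ⟨hXs i, (P : Set G), hP, Set.inter_subset_left⟩
    exact hcontra i this
  choose Ys hYcon hYχ hYdisj using hsep
  obtain ⟨hTcon, hTχ⟩ := char_iInter (P : Set G) χ ⟨hP, hne, hmul, hcon⟩ n Ys
    (fun i => ⟨hYcon i, hYχ i⟩)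
  set T := (P : Set G) ∩ ⋂ i, Ys i with hT
  have hXT : X ∩ T = ∅ := by
    rw [hunion]
    ext x
    simp only [Set.mem_inter_iff, Set.mem_iUnion, Set.mem_empty_iff_false, iff_false]
    rintro ⟨⟨i, hxi⟩, hxP, hxT⟩
    have : x ∈ Xs i ∩ Ys i := ⟨hxi, Set.mem_iInter.mp hxT i⟩
    rw [hYdisj i] at this
    exact this
  have : χ (X ∩ T) := (hmul X T hX hTcon).2 ⟨hχX, hTχ⟩
  rw [hXT] at this
  exact hne this
end

section
/- Let P be a subsemigroup of a group G containing the identity e, with trivial group of units P* = {e}. For p ∈ P and g ∈ G, if gp ∈ X ⟺ p ∈ X holds for every constructible right ideal X of P, then g = e. -/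
/-- If `P` is a submonoid of `G` with trivial units and for `p ∈ P`, `g ∈ G` one has
`gp ∈ X ↔ p ∈ X` for every constructible right ideal `X` of `P`, then `g = e`. -/
theorem stmt_7 {G : Type*} [Group G] (P : Submonoid G)
    (hunits : ∀ p ∈ P, p⁻¹ ∈ P → p = 1)
    (p : G) (hp : p ∈ P) (g : G)
    (h : ∀ X : Set G, IsConstr (P : Set G) X → (g * p ∈ X ↔ p ∈ X)) :
    g = 1 := by
  -- principal ideal pP is constructible
  have hpP : IsConstr (P : Set G) {y : G | y ∈ P ∧ ∃ x ∈ (P : Set G), 1 * y = p * x} :=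
    IsConstr.step 1 p P.one_mem hp P IsConstr.base
  have hp1 : p ∈ {y : G | y ∈ P ∧ ∃ x ∈ (P : Set G), 1 * y = p * x} :=
    ⟨hp, 1, P.one_mem, by group⟩
  obtain ⟨hgpP, x, hxP, hx⟩ := (h _ hpP).2 hp1
  -- gp ∈ P and gp = p * x
  have hgpP' : IsConstr (P : Set G)
      {y : G | y ∈ P ∧ ∃ z ∈ (P : Set G), 1 * y = (g * p) * z} :=
    IsConstr.step 1 (g * p) P.one_mem hgpP P IsConstr.base
  have hgp1 : g * p ∈ {y : G | y ∈ P ∧ ∃ z ∈ (P : Set G), 1 * y = (g * p) * z} :=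
    ⟨hgpP, 1, P.one_mem, by group⟩
  obtain ⟨hpP2, y, hyP, hy⟩ := (h _ hgpP').1 hgp1
  -- p = g * p * y = p * x * y, so x * y = 1
  rw [one_mul] at hx hy
  have hxy : x * y = 1 := by
    have : p * (x * y) = p * 1 := by
      rw [mul_one, ← mul_assoc, ← hx, ← hy]
    exact mul_left_cancel this
  have hx1 : x = 1 := hunits x hxP (by
    have hy' : x⁻¹ = y := inv_eq_of_mul_eq_one_right hxy
    rw [hy']; exact hyP)
  have : g * p = p := by rw [hx, hx1, mul_one]
  exact mul_right_cancel (by rw [this, one_mul])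
end

section
/- Let (G,P) be a quasi-lattice ordered group and let P = ⟨S, R⟩⁺ be presented by a positive r-complete presentation such that for every generator u ∈ S there is a generator v ∈ S with uP ∩ vP = ∅. Then G₀ := {g ∈ G : pP ∩ gP ≠ ∅ ≠ pP ∩ g⁻¹P for all p ∈ P} is trivial, i.e., G₀ = {e}. -/
/-- Let `(G,P)` be quasi-lattice ordered (`P ∩ P⁻¹ = {e}` and every nonempty `gP ∩ P` is
a principal right ideal `pP`), with a generating set `S ⊆ P` such that every `p ≠ e` in
`P` lies in `uP` for some `u ∈ S`, and for every `u ∈ S` there is `v ∈ S` with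
`uP ∩ vP = ∅`. Then `G₀ = {g : pP ∩ gP ≠ ∅ ≠ pP ∩ g⁻¹P for all p ∈ P}` is trivial. -/
theorem stmt_8 {G : Type*} [Group G] (P : Submonoid G) (S : Set G) (hS : S ⊆ (P : Set G))
    (hunits : ∀ p ∈ P, p⁻¹ ∈ P → p = 1)
    (hqlo : ∀ g : G, ({z | ∃ y ∈ P, z = g * y} ∩ (P : Set G)).Nonempty →
        ∃ p ∈ P, {z | ∃ y ∈ P, z = g * y} ∩ (P : Set G) = {z | ∃ y ∈ P, z = p * y})
    (hgen : ∀ p ∈ P, p ≠ 1 → ∃ u ∈ S, ∃ y ∈ P, p = u * y)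
    (hdisj : ∀ u ∈ S, ∃ v ∈ S,
        {z | ∃ y ∈ P, z = u * y} ∩ {z | ∃ y ∈ P, z = v * y} = ∅)
    (g : G)
    (hg : ∀ p ∈ P, ({z | ∃ y ∈ P, z = p * y} ∩ {z | ∃ y ∈ P, z = g * y}).Nonempty ∧
        ({z | ∃ y ∈ P, z = p * y} ∩ {z | ∃ y ∈ P, z = g⁻¹ * y}).Nonempty) :
    g = 1 := by
  -- Key claim: if hP meets pP for every p ∈ P, then h⁻¹ ∈ P.
  have key : ∀ h : G,
      (∀ p ∈ P, ({z | ∃ y ∈ P, z = p * y} ∩ {z | ∃ y ∈ P, z = h * y}).Nonempty) →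
      h⁻¹ ∈ P := by
    intro h hh
    -- hP ∩ P is nonempty (take p = 1)
    have h1 : ({z | ∃ y ∈ P, z = h * y} ∩ (P : Set G)).Nonempty := by
      obtain ⟨x, hx1, hx2⟩ := hh 1 P.one_mem
      refine ⟨x, hx2, ?_⟩
      obtain ⟨y, hy, hxy⟩ := hx1
      simpa [hxy] using hy
    obtain ⟨p, hp, hpeq⟩ := hqlo h h1
    -- p = 1
    have hp1 : p = 1 := by
      by_contra hpne
      obtain ⟨u, hu, y, hy, hpuy⟩ := hgen p hp hpne
      obtain ⟨v, hv, hdis⟩ := hdisj u hu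
      -- hP meets vP
      obtain ⟨x, hxv, hxh⟩ := hh v (hS hv)
      -- x ∈ P
      have hxP : x ∈ (P : Set G) := by
        obtain ⟨y', hy', rfl⟩ := hxv
        exact P.mul_mem (hS hv) hy'
      -- x ∈ hP ∩ P = pP ⊆ uP
      have hxp : x ∈ {z | ∃ y ∈ P, z = p * y} := by
        rw [← hpeq]; exact ⟨hxh, hxP⟩
      obtain ⟨y', hy', hxy'⟩ := hxp
      have hxu : x ∈ {z | ∃ y ∈ P, z = u * y} :=
        ⟨y * y', P.mul_mem hy hy', by rw [hxy', hpuy, mul_assoc]⟩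
      exact absurd hdis (Set.Nonempty.ne_empty ⟨x, hxu, hxv⟩)
    -- so hP ∩ P = P, and 1 ∈ P gives h⁻¹ ∈ P
    have h1mem : (1 : G) ∈ {z | ∃ y ∈ P, z = h * y} ∩ (P : Set G) := by
      rw [hpeq, hp1]
      exact ⟨1, P.one_mem, by simp⟩
    obtain ⟨⟨y, hy, h1y⟩, -⟩ := h1mem
    rwa [inv_eq_of_mul_eq_one_right h1y.symm]
  have hginv : g⁻¹ ∈ P := key g (fun p hp => (hg p hp).1)
  have hgmem : g ∈ P := by
    have := key g⁻¹ (fun p hp => (hg p hp).2)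
    rwa [inv_inv] at this
  have := hunits g⁻¹ hginv (by rwa [inv_inv])
  simpa using inv_eq_one.mp this
end

section
/- Let R be an integral domain, I, I' ideals of R with I' ⊆ I, J a nonzero ideal with J ⊆ I', and a ∈ 1 + J. Then I' ∩ aI = aI'. -/
/-- Let `R` be an integral domain, `I' ⊆ I` ideals, `J` a nonzero ideal with `J ⊆ I'`,
and `a ∈ 1 + J`. Then `I' ∩ aI = aI'`. -/
theorem stmt_10 {R : Type*} [CommRing R] [IsDomain R]
    (I I' J : Ideal R) (hI : I' ≤ I) (hJ : J ≤ I') (hJne : J ≠ ⊥)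
    (a : R) (ha : a - 1 ∈ J) :
    (I' : Set R) ∩ ((a * ·) '' (I : Set R)) = (a * ·) '' (I' : Set R) := by
  ext r
  constructor
  · rintro ⟨hr, s, hs, rfl⟩
    refine ⟨s, ?_, rfl⟩
    have h1 : (1 - a) * s ∈ I' := I'.mul_mem_right s (hJ (by simpa using J.neg_mem ha))
    have : (1 - a) * s + a * s ∈ I' := I'.add_mem h1 hr
    simpa [sub_mul] using this
  · rintro ⟨s, hs, rfl⟩
    exact ⟨Ideal.mul_mem_left _ _ hs, s, hI hs, rfl⟩
end

section
/- If a transformation groupoid G ⋉ X of a global action of a group G on a compact space X is almost finite and some point x ∈ X has trivial stabilizer, then G is amenable. -/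
open scoped Pointwise symmDiff

/-- If the transformation groupoid `G ⋉ X` of a global action of a discrete group `G` on a
compact space `X` is almost finite (for every compact `C ⊆ G ⋉ X` and `ε > 0` there is a
compact open principal subgroupoid `K` with `|CKy \ Ky| < ε|Ky|` for all units `y`), and
some `x ∈ X` has trivial stabilizer, then `G` satisfies the Følner condition, hence is
amenable. -/
theorem stmt_13 {G X : Type*} [Group G] [TopologicalSpace G] [DiscreteTopology G]
    [DecidableEq G] [TopologicalSpace X] [CompactSpace X]
    [MulAction G X] [ContinuousConstSMul G X]
    (x : X) (hx : ∀ g : G, g • x = x → g = 1)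
    (haf : ∀ C : Set (G × X), IsCompact C → ∀ ε : ℝ, 0 < ε →
      ∃ K : Set (G × X), IsCompact K ∧ IsOpen K ∧
        (∀ y : X, ((1 : G), y) ∈ K) ∧
        (∀ g h : G, ∀ y : X, (g, h • y) ∈ K → (h, y) ∈ K → (g * h, y) ∈ K) ∧
        (∀ g : G, ∀ y : X, (g, y) ∈ K → (g⁻¹, g • y) ∈ K) ∧
        (∀ g : G, ∀ y : X, (g, y) ∈ K → g • y = y → g = 1) ∧
        (∀ y : X,
          ((({k : G | ∃ h : G, (k * h⁻¹, h • y) ∈ C ∧ (h, y) ∈ K} \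
                {k : G | (k, y) ∈ K}).ncard : ℝ)
            < ε * (({k : G | (k, y) ∈ K}).ncard : ℝ)))) :
    ∀ E : Finset G, ∀ ε : ℝ, 0 < ε →
      ∃ F : Finset G, F.Nonempty ∧ ∀ s ∈ E, (((s • F) ∆ F).card : ℝ) < ε * F.card := by
  intro E ε hε
  classical
  set S : Finset G := E ∪ E⁻¹ with hS
  have hC : IsCompact ((↑S : Set G) ×ˢ (Set.univ : Set X)) :=
    S.finite_toSet.isCompact.prod isCompact_univ
  obtain ⟨K, hKc, -, hK1, -, -, -, hest⟩ := haf _ hC (ε / 2) (by linarith)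
  set Fs : Set G := {k : G | (k, x) ∈ K} with hFs
  have hFsfin : Fs.Finite := by
    have h1 : (Prod.fst '' K).Finite := (hKc.image continuous_fst).finite_of_discrete
    exact h1.subset fun k hk => ⟨(k, x), hk, rfl⟩
  set F : Finset G := hFsfin.toFinset with hF
  have hFcoe : (↑F : Set G) = Fs := hFsfin.coe_toFinset
  have h1F : (1 : G) ∈ F := by
    rw [hF, hFsfin.mem_toFinset]
    exact hK1 x
  refine ⟨F, ⟨1, h1F⟩, ?_⟩
  intro s hs
  have hest' := hest x
  set A : Set G := {k : G | ∃ h : G,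
      (k * h⁻¹, h • x) ∈ (↑S : Set G) ×ˢ (Set.univ : Set X) ∧ (h, x) ∈ K} with hA
  have hAfin : (A \ Fs).Finite := by
    apply Set.Finite.subset (S * F).finite_toSet
    rintro k ⟨⟨h, hhS, hhK⟩, -⟩
    have hkF : h ∈ F := by rw [hF, hFsfin.mem_toFinset]; exact hhK
    have : k = (k * h⁻¹) * h := by group
    rw [this]
    exact Finset.mul_mem_mul (by simpa using hhS.1) hkF
  have hFs_card : (Fs.ncard : ℝ) = (F.card : ℝ) := by
    rw [← hFcoe, Set.ncard_coe_finset]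
  have key : ∀ t ∈ S, (((t • F \ F).card : ℝ)) < ε / 2 * F.card := by
    intro t ht
    have hsub : (↑(t • F \ F) : Set G) ⊆ A \ Fs := by
      intro k hk
      simp only [Finset.coe_sdiff, Set.mem_diff, Finset.mem_coe,
        Finset.mem_smul_finset] at hk
      obtain ⟨⟨h, hh, rfl⟩, hk2⟩ := hk
      have hhK : (h, x) ∈ K := by rwa [hF, hFsfin.mem_toFinset] at hh
      refine ⟨⟨h, ⟨?_, Set.mem_univ _⟩, hhK⟩, ?_⟩
      · simpa [smul_eq_mul, mul_inv_cancel_right] using ht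
      · intro hmem
        exact hk2 (by rwa [hF, hFsfin.mem_toFinset])
    have hle : ((t • F \ F).card : ℕ) ≤ (A \ Fs).ncard := by
      rw [← Set.ncard_coe_finset]
      exact Set.ncard_le_ncard hsub hAfin
    calc ((t • F \ F).card : ℝ) ≤ ((A \ Fs).ncard : ℝ) := by exact_mod_cast hle
      _ < ε / 2 * (Fs.ncard : ℝ) := hest'
      _ = ε / 2 * F.card := by rw [hFs_card]
  have hsS : s ∈ S := Finset.mem_union_left _ hs
  have hsiS : s⁻¹ ∈ S := Finset.mem_union_right _ (by rw [Finset.mem_inv]; exact ⟨s, hs, rfl⟩)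
  have hcard2 : (F \ s • F).card = (s⁻¹ • F \ F).card := by
    have : F \ s • F = s • (s⁻¹ • F \ F) := by
      rw [Finset.smul_finset_sdiff, smul_inv_smul]
    rw [this, Finset.card_smul_finset]
  have hsymm : ((s • F) ∆ F).card = (s • F \ F).card + (F \ s • F).card := by
    rw [symmDiff_def, Finset.sup_eq_union, Finset.card_union_of_disjoint disjoint_sdiff_sdiff]
  rw [hsymm]
  push_cast
  have h1 := key s hsS
  have h2 := key s⁻¹ hsiS
  rw [hcard2]
  push_cast
  linarith
end

section
/- In a graph E satisfying condition (PI) (no breaking vertices, condition (K), every vertex in each maximal tail connects to a loop in the tail), every vertex v with infinitely many incoming edges (|r⁻¹(v)| = ∞) lies on infinitely many loops μᵢ = ζᵢηᵢ based at v whose first edges ζᵢ ∈ E¹ are pairwise distinct. -/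
section Graph

variable {V E : Type*}

/-- There is an edge from `a` to `b` (source `a`, range `b`). -/
def Step (s r : E → V) (a b : V) : Prop := ∃ e : E, s e = a ∧ r e = b

/-- `Reaches s r a b`: there is a finite path from `a` to `b` (`b ← a`). -/
def Reaches (s r : E → V) : V → V → Prop := Relation.ReflTransGen (Step s r)

/-- A list of edges is a path: the source of each edge is the range of the next. -/
def IsPathList (s r : E → V) (p : List E) : Prop := List.Chain' (fun e e' => s e = r e') p

/-- A nonempty path which is a loop based at `v`. -/
def IsLoopAt (s r : E → V) (p : List E) (v : V) : Prop :=
  p ≠ [] ∧ IsPathList s r p ∧ (∀ e, p.head? = some e → r e = v) ∧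
    (∀ e, p.getLast? = some e → s e = v)

/-- `Ω(v)`: the vertices `w ≠ v` with `w ↚ v`. -/
def OmegaSet (s r : E → V) (v : V) : Set V := {w | w ≠ v ∧ ¬ Reaches s r v w}

/-- `v` is a breaking vertex: `|r⁻¹(v)| = ∞` and `0 < |r⁻¹(v) \ s⁻¹(Ω(v))| < ∞`. -/
def IsBreaking (s r : E → V) (v : V) : Prop :=
  {e : E | r e = v}.Infinite ∧ {e : E | r e = v ∧ s e ∉ OmegaSet s r v}.Finite ∧
    {e : E | r e = v ∧ s e ∉ OmegaSet s r v}.Nonempty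

/-- Condition (K): every loop admits a second loop at the same base vertex, neither being
an initial segment of the other (`μ·μ' = 0` in the path semilattice). -/
def CondK (s r : E → V) : Prop :=
  ∀ v : V, ∀ p : List E, IsLoopAt s r p v →
    ∃ p' : List E, IsLoopAt s r p' v ∧ ¬ p <+: p' ∧ ¬ p' <+: p

/-- A maximal tail. -/
def MaximalTail (s r : E → V) (M : Set V) : Prop :=
  (∀ v w : V, w ∈ M → Reaches s r w v → v ∈ M) ∧
  (∀ v ∈ M, {e : E | r e = v}.Finite → {e : E | r e = v}.Nonempty →
    ∃ e : E, r e = v ∧ s e ∈ M) ∧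
  (∀ v ∈ M, ∀ w ∈ M, ∃ y ∈ M, Reaches s r y v ∧ Reaches s r y w)

end Graph

/-- In a graph satisfying condition (PI) (no breaking vertices, condition (K), and every
vertex of every maximal tail connects to a loop in the tail), every vertex `v` with
infinitely many incoming edges lies on infinitely many loops with pairwise distinct
first edges. -/
theorem stmt_14 {V E : Type*} [Countable V] [Countable E] (s r : E → V)
    (hnb : ∀ v : V, ¬ IsBreaking s r v)
    (hK : CondK s r)
    (htail : ∀ M : Set V, MaximalTail s r M → ∀ v ∈ M,
      ∃ w ∈ M, (∃ p : List E, IsLoopAt s r p w) ∧ Reaches s r w v)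
    (v : V) (hv : {e : E | r e = v}.Infinite) :
    {ζ : E | r ζ = v ∧ Reaches s r v (s ζ)}.Infinite := by
  -- The set in question coincides with the set appearing in `IsBreaking`.
  have hset : {e : E | r e = v ∧ s e ∉ OmegaSet s r v}
      = {ζ : E | r ζ = v ∧ Reaches s r v (s ζ)} := by
    ext e
    simp only [Set.mem_setOf_eq, OmegaSet, not_and, not_not, and_congr_right_iff]
    intro _
    constructor
    · intro h
      by_cases hev : s e = v
      · rw [hev]; exact Relation.ReflTransGen.refl
      · exact h hev
    · intro h _; exact h
  -- `M` = vertices reachable from `v` is a maximal tail.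
  set M : Set V := {w | Reaches s r v w} with hM
  have hvM : v ∈ M := Relation.ReflTransGen.refl
  have hMt : MaximalTail s r M := by
    refine ⟨?_, ?_, ?_⟩
    · intro a b hb hba
      exact Relation.ReflTransGen.trans hb hba
    · intro a ha hfin _
      rcases Relation.ReflTransGen.cases_tail ha with h | ⟨c, hvc, e, hse, hre⟩
      · exact absurd (h ▸ hfin) hv
      · exact ⟨e, hre, hse ▸ hvc⟩
    · intro a ha b hb
      exact ⟨v, hvM, ha, hb⟩
  obtain ⟨w, hwM, ⟨p, hp⟩, hwv⟩ := htail M hMt v hvM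
  -- A lemma: walking along a path list from its last source to the source of its head.
  have key : ∀ (q : List E) (e : E), IsPathList s r (e :: q) →
      ∀ f, (e :: q).getLast? = some f → Reaches s r (s f) (s e) := by
    intro q
    induction q with
    | nil =>
      intro e _ f hf
      simp only [List.getLast?_singleton, Option.some.injEq] at hf
      rw [hf]; exact Relation.ReflTransGen.refl
    | cons g q ih =>
      intro e hpath f hf
      have hchain : IsPathList s r (g :: q) ∧ s e = r g := by
        have hpc := List.isChain_cons_cons.mp hpath
        exact ⟨hpc.2, hpc.1⟩
      have h1 : Reaches s r (s f) (s g) := ih g hchain.1 f (by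
        rwa [List.getLast?_cons_cons] at hf)
      have h2 : Step s r (s g) (s e) := ⟨g, rfl, hchain.2.symm⟩
      exact h1.tail h2
  -- Produce one element of the set: an edge into `v` whose source is reachable from `v`.
  have hne : {e : E | r e = v ∧ s e ∉ OmegaSet s r v}.Nonempty := by
    rw [hset]
    by_cases hwveq : w = v
    · subst hwveq
      obtain ⟨e, q, rfl⟩ : ∃ e q, p = e :: q := by
        rcases p with _ | ⟨e, q⟩
        · exact absurd rfl hp.1
        · exact ⟨e, q, rfl⟩
      have hrev : r e = w := hp.2.2.1 e rfl
      obtain ⟨f, hf⟩ : ∃ f, (e :: q).getLast? = some f :=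
        ⟨(e :: q).getLast (by simp), List.getLast?_eq_getLast _⟩
      have hsf : s f = w := hp.2.2.2 f hf
      have := key q e hp.2.1 f hf
      rw [hsf] at this
      exact ⟨e, hrev, this⟩
    · rcases Relation.ReflTransGen.cases_tail hwv with h | ⟨c, hwc, e, hse, hre⟩
      · exact absurd h.symm hwveq
      · exact ⟨e, hre, hse ▸ (Relation.ReflTransGen.trans hwM hwc)⟩
  -- Conclude using that `v` is not breaking.
  by_contra hfin
  rw [Set.not_infinite] at hfin
  exact hnb v ⟨hv, hset ▸ hfin, hne⟩
end

section
/- Let S be an inverse semigroup with zero, E its semilattice of idempotents, and σ : S⧹{0} → G an idempotent pure partial homomorphism to a group G. For s ∈ S⧹{0} with σ(s) = g and a character χ of E with χ(s*s) = 1, define (g.χ)(e) = χ(s*es). Then this is well-defined (independent of the choice of s with σ(s) = g and χ(s*s) = 1) and g.χ is again a character with (g.χ)(ss*) = 1. -/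
/-- Let `S` be an inverse semigroup with zero (involution `star`, idempotents commuting),
`σ : S \ {0} → G` an idempotent pure partial homomorphism to a group `G`, and `χ` a
character of the semilattice of idempotents `E` of `S`. Given `g ∈ G` and `s, t ≠ 0` with
`σ(s) = σ(t) = g` and `χ(s*s) = χ(t*t) = 1`, the formula `(g.χ)(e) = χ(s* e s)` is
well-defined (independent of `s`), and `g.χ` is again a character with `(g.χ)(ss*) = 1`. -/
theorem stmt_17 {S G : Type*} [SemigroupWithZero S] [Group G]
    (star : S → S)
    (hst1 : ∀ s : S, s * star s * s = s)
    (hst2 : ∀ s : S, star s * s * star s = star s)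
    (hstst : ∀ s : S, star (star s) = s)
    (hstmul : ∀ s t : S, star (s * t) = star t * star s)
    (hcomm : ∀ e f : S, e * e = e → f * f = f → e * f = f * e)
    (σ : S → G)
    (hσ : ∀ s t : S, s * t ≠ 0 → σ (s * t) = σ s * σ t)
    (hpure : ∀ s : S, s ≠ 0 → (σ s = 1 ↔ s * s = s))
    (χ : S → Prop)
    (hmul : ∀ e f : S, e * e = e → f * f = f → (χ (e * f) ↔ χ e ∧ χ f))
    (hzero : ¬ χ 0)
    (g : G) (s t : S) (hs : s ≠ 0) (ht : t ≠ 0)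
    (hσs : σ s = g) (hσt : σ t = g)
    (hχs : χ (star s * s)) (hχt : χ (star t * t)) :
    (∀ e : S, e * e = e → (χ (star s * e * s) ↔ χ (star t * e * t))) ∧
    χ (star s * (s * star s) * s) ∧
    (∀ e f : S, e * e = e → f * f = f →
      (χ (star s * (e * f) * s) ↔ χ (star s * e * s) ∧ χ (star s * f * s))) ∧
    ¬ χ (star s * 0 * s) := by
  have proj : ∀ u x : S, star u * (u * (star u * x)) = star u * x := by
    intro u x
    rw [← mul_assoc, ← mul_assoc, hst2]
  have hquid : ∀ u : S, (u * star u) * (u * star u) = u * star u := by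
    intro u
    calc (u * star u) * (u * star u) = (u * star u * u) * star u := by simp only [mul_assoc]
      _ = u * star u := by rw [hst1]
  have commSand : ∀ u e z : S, e * e = e →
      e * (u * (star u * z)) = u * (star u * (e * z)) := by
    intro u e z he
    have hc := hcomm e (u * star u) he (hquid u)
    calc e * (u * (star u * z)) = (e * (u * star u)) * z := by simp only [mul_assoc]
      _ = ((u * star u) * e) * z := by rw [hc]
      _ = u * (star u * (e * z)) := by simp only [mul_assoc]
  have idem_conj : ∀ u e : S, e * e = e →
      (star u * (e * u)) * (star u * (e * u)) = star u * (e * u) := by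
    intro u e he
    calc (star u * (e * u)) * (star u * (e * u))
        = star u * (e * (u * (star u * (e * u)))) := by simp only [mul_assoc]
      _ = star u * (u * (star u * (e * (e * u)))) := by rw [commSand u e (e * u) he]
      _ = star u * (e * (e * u)) := proj u _
      _ = star u * (e * u) := by rw [show e * (e * u) = e * u by rw [← mul_assoc, he]]
  have conj_mul : ∀ u e f : S, e * e = e →
      (star u * (e * u)) * (star u * (f * u)) = star u * (e * (f * u)) := by
    intro u e f he
    calc (star u * (e * u)) * (star u * (f * u))
        = star u * (e * (u * (star u * (f * u)))) := by simp only [mul_assoc]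
      _ = star u * (u * (star u * (e * (f * u)))) := by rw [commSand u e (f * u) he]
      _ = star u * (e * (f * u)) := proj u _
  have hestar : ∀ e : S, e * e = e → star e = e := by
    intro e he
    have h1 : star e * star e = star e := by rw [← hstmul, he]
    have hc := hcomm e (star e) he h1
    have h2 : e * star e = e := by
      calc e * star e = (e * e) * star e := by rw [he]
        _ = e * (e * star e) := mul_assoc ..
        _ = e * (star e * e) := by rw [hc]
        _ = (e * star e) * e := (mul_assoc ..).symm
        _ = e := hst1 e
    calc star e = star e * e * star e := (hst2 e).symm
      _ = (e * star e) * star e := by rw [← hc]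
      _ = e * (star e * star e) := mul_assoc ..
      _ = e * star e := by rw [h1]
      _ = e := h2
  have hxy : ∀ x : S, x ≠ 0 → x * star x ≠ 0 := by
    intro x hx h
    apply hx
    have h1 := hst1 x
    rw [h, zero_mul] at h1
    exact h1.symm
  have hσstar : ∀ x : S, x ≠ 0 → σ (star x) = (σ x)⁻¹ := by
    intro x hx
    have h1 : x * star x ≠ 0 := hxy x hx
    have h2 : (x * star x) * x ≠ 0 := by rw [hst1]; exact hx
    have h3 := hσ (x * star x) x h2
    rw [hst1 x] at h3
    have h4 : σ (x * star x) * σ x = 1 * σ x := by rw [one_mul, ← h3]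
    have h5 : σ (x * star x) = 1 := mul_right_cancel h4
    rw [hσ x (star x) h1] at h5
    exact eq_inv_of_mul_eq_one_right h5
  have ha : (star s * s) * (star s * s) = star s * s := by
    calc (star s * s) * (star s * s) = star s * (s * star s * s) := by simp only [mul_assoc]
      _ = star s * s := by rw [hst1]
  have hb : (star t * t) * (star t * t) = star t * t := by
    calc (star t * t) * (star t * t) = star t * (t * star t * t) := by simp only [mul_assoc]
      _ = star t * t := by rw [hst1]
  have χab : χ ((star s * s) * (star t * t)) := (hmul _ _ ha hb).mpr ⟨hχs, hχt⟩
  have hab0 : (star s * s) * (star t * t) ≠ 0 := fun h => hzero (h ▸ χab)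
  have hstt0 : s * star t ≠ 0 := by
    intro h
    apply hab0
    calc (star s * s) * (star t * t) = star s * ((s * star t) * t) := by simp only [mul_assoc]
      _ = 0 := by rw [h, zero_mul, mul_zero]
  have hσp : σ (s * star t) = 1 := by
    rw [hσ _ _ hstt0, hσs, hσstar t ht, hσt]
    group
  have hpidem : (s * star t) * (s * star t) = s * star t := (hpure _ hstt0).mp hσp
  have hswap : t * star s = s * star t := by
    have h := hestar (s * star t) hpidem
    rw [hstmul, hstst] at h
    exact h
  have huu : (star s * t) * (star s * t) = (star s * s) * (star t * t) := by
    calc (star s * t) * (star s * t) = star s * ((t * star s) * t) := by simp only [mul_assoc]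
      _ = star s * ((s * star t) * t) := by rw [hswap]
      _ = (star s * s) * (star t * t) := by simp only [mul_assoc]
  have hu0 : star s * t ≠ 0 := by
    intro h
    apply hab0
    rw [← huu, h, zero_mul]
  have hσu : σ (star s * t) = 1 := by
    rw [hσ _ _ hu0, hσstar s hs, hσs, hσt]
    group
  have huidem : (star s * t) * (star s * t) = star s * t := (hpure _ hu0).mp hσu
  have hχu : χ (star s * t) := by
    have hueq : star s * t = (star s * s) * (star t * t) := by rw [← huidem, huu]
    rw [hueq]; exact χab
  have main : ∀ e : S, e * e = e → (χ (star s * (e * s)) ↔ χ (star t * (e * t))) := by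
    intro e he
    have h1 : (star s * (e * s)) * (star s * t) = star s * (e * t) := by
      calc (star s * (e * s)) * (star s * t)
          = star s * (e * (s * (star s * t))) := by simp only [mul_assoc]
        _ = star s * (s * (star s * (e * t))) := by rw [commSand s e t he]
        _ = star s * (e * t) := proj s _
    have h2 : (star s * t) * (star t * (e * t)) = star s * (e * t) := by
      calc (star s * t) * (star t * (e * t))
          = star s * (t * (star t * (e * t))) := by simp only [mul_assoc]
        _ = star s * (e * (t * (star t * t))) := by rw [← commSand t e t he]
        _ = star s * (e * t) := by rw [show t * (star t * t) = t from by rw [← mul_assoc, hst1]]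
    have i1 := hmul _ _ (idem_conj s e he) huidem
    have i2 := hmul _ _ huidem (idem_conj t e he)
    rw [h1] at i1
    rw [h2] at i2
    constructor
    · intro hx
      exact (i2.mp (i1.mpr ⟨hx, hχu⟩)).2
    · intro hx
      exact (i1.mp (i2.mpr ⟨hχu, hx⟩)).1
  refine ⟨?_, ?_, ?_, ?_⟩
  · intro e he
    have := main e he
    simpa only [mul_assoc] using this
  · have h : star s * (s * star s) * s = star s * s := by rw [← mul_assoc, hst2]
    rw [h]; exact hχs
  · intro e f he hf
    have hprod : star s * (e * f) * s = (star s * (e * s)) * (star s * (f * s)) := by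
      rw [conj_mul s e f he]; simp only [mul_assoc]
    rw [hprod]
    have := hmul _ _ (idem_conj s e he) (idem_conj s f hf)
    simpa only [mul_assoc] using this
  · rw [mul_zero, zero_mul]; exact hzero
end

section
/- With S, E, σ, G as above and the partial action of G on characters of E, the set of maximal characters is invariant: for g ∈ G and a maximal character χ in the domain U_{g⁻¹} (i.e., χ(s*s) = 1 for some s with σ(s) = g), the character g.χ is again maximal. -/
/-- A character of the idempotent semilattice of a semigroup with zero: a nonzero
multiplicative `{0,1}`-valued map on idempotents, vanishing at `0`. -/
def IsChar {S : Type*} [SemigroupWithZero S] (χ : S → Prop) : Prop :=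
  (∀ e f : S, e * e = e → f * f = f → (χ (e * f) ↔ χ e ∧ χ f)) ∧
    ¬ χ 0 ∧ (∃ e : S, χ e) ∧ (∀ e : S, χ e → e * e = e)

/-- A maximal character: no character strictly dominates it. -/
def IsMaxChar {S : Type*} [SemigroupWithZero S] (χ : S → Prop) : Prop :=
  IsChar χ ∧ ∀ ψ : S → Prop, IsChar ψ → (∀ e, χ e → ψ e) → ∀ e, ψ e → χ e

section AuxAlgebra
variable {S : Type*} [Semigroup S]

lemma aux_idemMul (hcomm : ∀ e f : S, e*e=e → f*f=f → e*f = f*e)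
    {e f : S} (he : e*e=e) (hf : f*f=f) : (e*f)*(e*f) = e*f := by
  have h : f*e = e*f := hcomm f e hf he
  calc (e*f)*(e*f) = e*((f*e)*f) := by simp [mul_assoc]
    _ = e*f := by rw [h, mul_assoc, hf, ← mul_assoc, he]

lemma aux_st_idem {s t : S} (hsts : s*t*s = s) : (s*t)*(s*t) = s*t := by
  rw [← mul_assoc, hsts]

lemma aux_key (hcomm : ∀ e f : S, e*e=e → f*f=f → e*f = f*e)
    {s t : S} (hsts : s*t*s = s) {e : S} (he : e*e=e) :
    s*(t*(e*s)) = e*s := by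
  have hst' : s*(t*s) = s := by rw [← mul_assoc, hsts]
  have h : (s*t)*e = e*(s*t) := hcomm (s*t) e (aux_st_idem hsts) he
  calc s*(t*(e*s)) = ((s*t)*e)*s := by simp [mul_assoc]
    _ = (e*(s*t))*s := by rw [h]
    _ = e*s := by rw [mul_assoc e (s*t) s, mul_assoc s t s, hst']

lemma aux_L1 (hcomm : ∀ e f : S, e*e=e → f*f=f → e*f = f*e)
    {s t : S} (hsts : s*t*s = s) {e : S} (he : e*e=e) :
    (t*e*s)*(t*e*s) = t*e*s := by
  calc (t*e*s)*(t*e*s) = t*(e*(s*(t*(e*s)))) := by simp [mul_assoc]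
    _ = t*(e*(e*s)) := by rw [aux_key hcomm hsts he]
    _ = t*e*s := by rw [← mul_assoc e e s, he, ← mul_assoc]

lemma aux_L2 (hcomm : ∀ e f : S, e*e=e → f*f=f → e*f = f*e)
    {s t : S} (hsts : s*t*s = s) {e f : S} (hf : f*f=f) :
    (t*e*s)*(t*f*s) = t*(e*f)*s := by
  calc (t*e*s)*(t*f*s) = t*(e*(s*(t*(f*s)))) := by simp [mul_assoc]
    _ = t*(e*(f*s)) := by rw [aux_key hcomm hsts hf]
    _ = t*(e*f)*s := by simp [mul_assoc]

lemma aux_L3 (hcomm : ∀ e f : S, e*e=e → f*f=f → e*f = f*e)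
    {s t : S} (htst : t*s*t = t) {e : S} (he : e*e=e) :
    t*(s*e*t)*s = e*(t*s) := by
  have hts := aux_st_idem htst
  have h : (t*s)*e = e*(t*s) := hcomm (t*s) e hts he
  calc t*(s*e*t)*s = ((t*s)*e)*(t*s) := by simp [mul_assoc]
    _ = (e*(t*s))*(t*s) := by rw [h]
    _ = e*(t*s) := by rw [mul_assoc, hts]

lemma aux_tst {s t : S} (htst : t*s*t = t) : t*(s*t)*s = t*s := by
  rw [← mul_assoc, htst]

end AuxAlgebra

/-- Translating a character along `e ↦ t*e*s` (restricted to idempotents)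
yields a character, provided `χ (t*s)` holds. -/
lemma aux_pushChar {S : Type*} [SemigroupWithZero S]
    (hcomm : ∀ e f : S, e*e=e → f*f=f → e*f = f*e)
    {s t : S} (hsts : s*t*s = s) (htst : t*s*t = t)
    {χ : S → Prop} (hχ : IsChar χ) (hdom : χ (t*s)) :
    IsChar (fun e => e*e=e ∧ χ (t*e*s)) := by
  obtain ⟨hm, h0, -, -⟩ := hχ
  refine ⟨?_, ?_, ?_, fun e he => he.1⟩
  · intro e f he hf
    constructor
    · rintro ⟨-, h⟩
      rw [← aux_L2 hcomm hsts hf] at h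
      have h2 := (hm _ _ (aux_L1 hcomm hsts he) (aux_L1 hcomm hsts hf)).mp h
      exact ⟨⟨he, h2.1⟩, ⟨hf, h2.2⟩⟩
    · rintro ⟨⟨-, h1⟩, ⟨-, h2⟩⟩
      refine ⟨aux_idemMul hcomm he hf, ?_⟩
      rw [← aux_L2 hcomm hsts hf]
      exact (hm _ _ (aux_L1 hcomm hsts he) (aux_L1 hcomm hsts hf)).mpr ⟨h1, h2⟩
  · rintro ⟨-, h⟩
    apply h0
    simpa using h
  · exact ⟨s*t, aux_st_idem hsts, by rw [aux_tst htst]; exact hdom⟩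

/-- Let `S` be an inverse semigroup with zero, `σ : S \ {0} → G` an idempotent pure
partial homomorphism. For `g ∈ G` and a maximal character `χ` in the domain `U_{g⁻¹}`
(i.e. `χ(s*s) = 1` for some `s ≠ 0` with `σ(s) = g`), the translated character
`g.χ : e ↦ χ(s* e s)` is again maximal. -/
theorem stmt_18 {S G : Type*} [SemigroupWithZero S] [Group G]
    (star : S → S)
    (hst1 : ∀ s : S, s * star s * s = s)
    (hst2 : ∀ s : S, star s * s * star s = star s)
    (hstst : ∀ s : S, star (star s) = s)
    (hstmul : ∀ s t : S, star (s * t) = star t * star s)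
    (hcomm : ∀ e f : S, e * e = e → f * f = f → e * f = f * e)
    (σ : S → G)
    (hσ : ∀ s t : S, s * t ≠ 0 → σ (s * t) = σ s * σ t)
    (hpure : ∀ s : S, s ≠ 0 → (σ s = 1 ↔ s * s = s))
    (g : G) (s : S) (hs : s ≠ 0) (hσs : σ s = g)
    (χ : S → Prop) (hχ : IsMaxChar χ) (hdom : χ (star s * s)) :
    IsMaxChar (fun e => e * e = e ∧ χ (star s * e * s)) := by
  set t := star s with ht
  have hsts : s * t * s = s := hst1 s
  have htst : t * s * t = t := hst2 s
  obtain ⟨hχc, hχmax⟩ := hχ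
  refine ⟨aux_pushChar hcomm hsts htst hχc hdom, ?_⟩
  intro ψ hψ hle e hψe
  -- ψ holds on s*t
  have hψst : ψ (s*t) :=
    hle (s*t) ⟨aux_st_idem hsts, by rw [aux_tst htst]; exact hdom⟩
  -- the back-translated character ψ' : e ↦ ψ (s*e*t)
  have hψ' : IsChar (fun e => e*e=e ∧ ψ (s*e*t)) :=
    aux_pushChar hcomm htst hsts hψ hψst
  -- χ is dominated by ψ'
  have hχle : ∀ e, χ e → (e*e=e ∧ ψ (s*e*t)) := by
    intro e hce
    have he : e*e = e := hχc.2.2.2 e hce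
    refine ⟨he, hle _ ⟨aux_L1 hcomm htst he, ?_⟩⟩
    rw [aux_L3 hcomm htst he]
    exact (hχc.1 e (t*s) he (aux_st_idem htst)).mpr ⟨hce, hdom⟩
  have hmax := hχmax _ hψ' hχle
  have he : e*e = e := hψ.2.2.2 e hψe
  refine ⟨he, ?_⟩
  exact hmax (t*e*s) ⟨aux_L1 hcomm hsts he, by
    rw [aux_L3 hcomm hsts he]
    exact (hψ.1 e (s*t) he (aux_st_idem hsts)).mpr ⟨hψe, hψst⟩⟩
end
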